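/- Suppose two token-level models M₁ and M₁′ over possibly different token vocabularies induce the same distribution over character strings: for all prompts l and strings z, P_{M₁}(z|l) = P_{M₁′}(z|l), where P_M(z|l) = ∑ over tokenizations (t₁,…,t_k) of z of ∏_i P_M(t_i | l·t₁⋯t_{i-1}). Then for any fixed second model M₂ and weight α ∈ [0,1], the CharED ensemble of (M₁, M₂) and of (M₁′, M₂) induce the same distribution over output strings: P_{CharED(M₁,M₂,α)}(z|l) = P_{CharED(M₁′,M₂,α)}(z|l) for all z, l. -/

import Mathlib

variable {A : Type*} [DecidableEq A]

/-- Marginal probability that the next character is `c`, under table `d` supported on `T`. -/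
noncomputable def margP (T : Finset (List A)) (d : List A → ℝ) (c : A) : ℝ :=
  ∑ t ∈ T.filter (fun t => t.head? = some c), d t

/-- Prune the table to entries starting with `c` and strip the first character. -/
def stepT (T : Finset (List A)) (c : A) : Finset (List A) :=
  (T.filter (fun t => t.head? = some c)).image List.tail

/-- The renormalized table after conditioning on first character `c` and stripping it. -/
noncomputable def stepD (T : Finset (List A)) (d : List A → ℝ) (c : A) : List A → ℝ :=
  fun s => (∑ t ∈ T.filter (fun t => t.head? = some c ∧ t.tail = s), d t) / margP T d c

/-- Remove the end-of-token entry (the empty string) and renormalize. -/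
noncomputable def eotStrip (d : List A → ℝ) : List A → ℝ :=
  fun s => if s = [] then 0 else d s / (1 - d [])

/-- Fuel-indexed token-level string probability: sum over tokenizations `(t₁,…,t_k)` of
`z` of `∏ᵢ M (l·t₁⋯t_{i-1}) tᵢ`. -/
noncomputable def strA (M : List A → List A → ℝ) : ℕ → List A → List A → ℝ
  | 0, _, z => if z = [] then 1 else 0
  | n + 1, l, z =>
    if z = [] then 1
    else ∑ k ∈ Finset.range z.length,
      M l (z.take (k + 1)) * strA M n (l ++ z.take (k + 1)) (z.drop (k + 1))

/-- `P_M(z | l)`: probability that token-level generation from `M` with prompt `l`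
produces the character string `z`. -/
noncomputable def strProb (M : List A → List A → ℝ) (l z : List A) : ℝ :=
  strA M z.length l z

/-- One-model-per-slot CharED process: `ced M₁ M₂ tok₁ tok₂ α l₁ l₂ g T₁ d₁ T₂ d₂ z` is
the probability that CharED, having already emitted `g` and with current (EOT-free)
lookup tables `d₁` on `T₁` and `d₂` on `T₂`, next emits exactly the characters of `z`.
At each step the character is drawn from `J = α·P₁ + (1-α)·P₂`, both tables are pruned,
stripped and renormalized, and then each model independently samples end-of-token
(probability `dᵢ' []`), refreshing its table from the model on the updated prompt if so,
and otherwise removing the EOT entry and renormalizing. -/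
noncomputable def ced (M₁ M₂ : List A → List A → ℝ)
    (tok₁ tok₂ : List A → Finset (List A)) (α : ℝ) (l₁ l₂ : List A) :
    List A → Finset (List A) → (List A → ℝ) → Finset (List A) → (List A → ℝ) →
      List A → ℝ
  | _, _, _, _, _, [] => 1
  | g, T₁, d₁, T₂, d₂, c :: z =>
    (α * margP T₁ d₁ c + (1 - α) * margP T₂ d₂ c) *
    (let g' := g ++ [c]
     let T₁' := stepT T₁ c; let d₁' := stepD T₁ d₁ c
     let T₂' := stepT T₂ c; let d₂' := stepD T₂ d₂ c
     let ε₁ := d₁' []; let ε₂ := d₂' []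
     ε₁ * ε₂ *
        ced M₁ M₂ tok₁ tok₂ α l₁ l₂ g' (tok₁ (l₁ ++ g')) (M₁ (l₁ ++ g'))
          (tok₂ (l₂ ++ g')) (M₂ (l₂ ++ g')) z +
     ε₁ * (1 - ε₂) *
        ced M₁ M₂ tok₁ tok₂ α l₁ l₂ g' (tok₁ (l₁ ++ g')) (M₁ (l₁ ++ g'))
          T₂' (eotStrip d₂') z +
     (1 - ε₁) * ε₂ *
        ced M₁ M₂ tok₁ tok₂ α l₁ l₂ g' T₁' (eotStrip d₁')
          (tok₂ (l₂ ++ g')) (M₂ (l₂ ++ g')) z +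
     (1 - ε₁) * (1 - ε₂) *
        ced M₁ M₂ tok₁ tok₂ α l₁ l₂ g' T₁' (eotStrip d₁') T₂' (eotStrip d₂') z)

/-- Probability that CharED on `(M₁, M₂)` with weight `α` and prompts `l₁, l₂`, starting
from freshly queried tables, emits the character string `z` (as the first `|z|` output
characters). -/
noncomputable def cedProb (M₁ M₂ : List A → List A → ℝ)
    (tok₁ tok₂ : List A → Finset (List A)) (α : ℝ) (l₁ l₂ z : List A) : ℝ :=
  ced M₁ M₂ tok₁ tok₂ α l₁ l₂ [] (tok₁ l₁) (M₁ l₁) (tok₂ l₂) (M₂ l₂) z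

/-! ### Auxiliary lemmas -/

lemma strA_nil (M : List A → List A → ℝ) (n : ℕ) (l : List A) : strA M n l [] = 1 := by
  cases n <;> simp [strA]

lemma strA_eq_of_le (M : List A → List A → ℝ) :
    ∀ n m (l z : List A), z.length ≤ n → z.length ≤ m → strA M n l z = strA M m l z := by
  intro n
  induction n with
  | zero =>
    intro m l z h1 _
    have hz : z = [] := List.length_eq_zero_iff.mp (Nat.le_zero.mp h1)
    subst hz
    rw [strA_nil, strA_nil]
  | succ n ih =>
    intro m l z h1 h2
    cases z with
    | nil => rw [strA_nil, strA_nil]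
    | cons c zs =>
      cases m with
      | zero => simp at h2
      | succ b =>
        simp only [strA, if_neg (List.cons_ne_nil c zs)]
        refine Finset.sum_congr rfl fun k hk => ?_
        have hk' := Finset.mem_range.mp hk
        simp only [List.length_cons] at h1 h2 hk'
        congr 1
        apply ih
        · rw [List.length_drop]; simp only [List.length_cons]; omega
        · rw [List.length_drop]; simp only [List.length_cons]; omega

lemma strProb_cons (M : List A → List A → ℝ) (l z : List A) (hz : z ≠ []) :
    strProb M l z =
      (∑ k ∈ Finset.range (z.length - 1),
        M l (z.take (k + 1)) * strProb M (l ++ z.take (k + 1)) (z.drop (k + 1))) + M l z := by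
  obtain ⟨m, hm⟩ : ∃ m, z.length = m + 1 := by
    cases z with
    | nil => exact absurd rfl hz
    | cons c zs => exact ⟨zs.length, rfl⟩
  unfold strProb
  rw [hm]
  simp only [strA, if_neg hz]
  rw [show z.length = m + 1 from hm, Finset.sum_range_succ]
  have htake : z.take (m + 1) = z := by rw [← hm]; exact List.take_length
  have hdrop : z.drop (m + 1) = [] := by rw [← hm]; exact List.drop_length
  rw [htake, hdrop, strA_nil, mul_one, show m + 1 - 1 = m from rfl]
  refine congrArg (· + M l z) ?_
  refine Finset.sum_congr rfl fun k hk => ?_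
  have hk' := Finset.mem_range.mp hk
  refine congrArg (M l (z.take (k + 1)) * ·) ?_
  exact strA_eq_of_le M m _ _ _ (by rw [List.length_drop]; omega) le_rfl

lemma M_eq (M₁ M₁' : List A → List A → ℝ) (tok₁ tok₁' : List A → Finset (List A))
    (hne₁ : ∀ l, ∀ t ∈ tok₁ l, t ≠ []) (hsupp₁ : ∀ l t, t ∉ tok₁ l → M₁ l t = 0)
    (hne₁' : ∀ l, ∀ t ∈ tok₁' l, t ≠ []) (hsupp₁' : ∀ l t, t ∉ tok₁' l → M₁' l t = 0)
    (heq : ∀ l z : List A, strProb M₁ l z = strProb M₁' l z) :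
    ∀ l, M₁ l = M₁' l := by
  have hnil : ∀ l, M₁ l [] = M₁' l [] := by
    intro l
    rw [hsupp₁ l [] (fun hm => (hne₁ l [] hm) rfl),
        hsupp₁' l [] (fun hm => (hne₁' l [] hm) rfl)]
  suffices h : ∀ n (t l : List A), t.length ≤ n → M₁ l t = M₁' l t by
    intro l; funext t; exact h t.length t l le_rfl
  intro n
  induction n with
  | zero =>
    intro t l h
    have ht : t = [] := List.length_eq_zero_iff.mp (Nat.le_zero.mp h)
    subst ht; exact hnil l
  | succ n ih =>
    intro t l h
    rcases eq_or_ne t [] with rfl | ht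
    · exact hnil l
    · have h1 := strProb_cons M₁ l t ht
      have h2 := strProb_cons M₁' l t ht
      have hs : (∑ k ∈ Finset.range (t.length - 1),
            M₁ l (t.take (k + 1)) * strProb M₁ (l ++ t.take (k + 1)) (t.drop (k + 1)))
          = ∑ k ∈ Finset.range (t.length - 1),
            M₁' l (t.take (k + 1)) * strProb M₁' (l ++ t.take (k + 1)) (t.drop (k + 1)) := by
        refine Finset.sum_congr rfl fun k hk => ?_
        have hk' := Finset.mem_range.mp hk
        have hlen : (t.take (k + 1)).length ≤ n := by
          rw [List.length_take]
          have hne : 1 ≤ t.length := by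
            cases t with
            | nil => exact absurd rfl ht
            | cons a ts => simp
          omega
        rw [ih (t.take (k + 1)) l hlen, heq]
      have h3 := heq l t
      linarith

lemma head_tail_iff (c : A) (s t : List A) :
    (t.head? = some c ∧ t.tail = s) ↔ t = c :: s := by
  cases t with
  | nil => simp
  | cons a ts => simp [List.head?, eq_comm]

lemma margP_congr (T T' : Finset (List A)) (d : List A → ℝ)
    (hT : ∀ t ∉ T, d t = 0) (hT' : ∀ t ∉ T', d t = 0) (c : A) :
    margP T d c = margP T' d c := by
  unfold margP
  have key : ∀ (S : Finset (List A)), (∀ t ∉ S, d t = 0) → S ⊆ T ∪ T' →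
      ∑ t ∈ S.filter (fun t => t.head? = some c), d t
        = ∑ t ∈ (T ∪ T').filter (fun t => t.head? = some c), d t := by
    intro S hS hsub
    apply Finset.sum_subset (Finset.filter_subset_filter _ hsub)
    intro t htu hnot
    have hpred := (Finset.mem_filter.mp htu).2
    exact hS t fun hmem => hnot (Finset.mem_filter.mpr ⟨hmem, hpred⟩)
  rw [key T hT Finset.subset_union_left, key T' hT' Finset.subset_union_right]

lemma stepD_eq (T : Finset (List A)) (d : List A → ℝ) (hd : ∀ t ∉ T, d t = 0) (c : A) :
    stepD T d c = fun s => d (c :: s) / margP T d c := by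
  funext s
  unfold stepD
  congr 1
  calc ∑ t ∈ T.filter (fun t => t.head? = some c ∧ t.tail = s), d t
      = ∑ t ∈ T, if t = c :: s then d t else 0 := by
        rw [Finset.sum_filter]
        exact Finset.sum_congr rfl fun t _ => by
          simp only [head_tail_iff]
    _ = if c :: s ∈ T then d (c :: s) else 0 := Finset.sum_ite_eq' T (c :: s) d
    _ = d (c :: s) := by
        split
        · rfl
        · exact (hd _ (by assumption)).symm

lemma mem_stepT (T : Finset (List A)) (c : A) (s : List A) (h : c :: s ∈ T) :
    s ∈ stepT T c := by
  unfold stepT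
  exact Finset.mem_image.mpr ⟨c :: s, Finset.mem_filter.mpr ⟨h, rfl⟩, rfl⟩

lemma eotStrip_stepD_support (T : Finset (List A)) (d : List A → ℝ)
    (hd : ∀ t ∉ T, d t = 0) (c : A) :
    ∀ s ∉ stepT T c, eotStrip (stepD T d c) s = 0 := by
  intro s hs
  unfold eotStrip
  split
  · rfl
  · rw [stepD_eq T d hd]
    have h0 : d (c :: s) = 0 := hd _ fun hm => hs (mem_stepT T c s hm)
    simp [h0]

lemma ced_congr (M₁ M₁' M₂ : List A → List A → ℝ)
    (tok₁ tok₁' tok₂ : List A → Finset (List A))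
    (hM : ∀ l, M₁ l = M₁' l)
    (hsupp₁ : ∀ l t, t ∉ tok₁ l → M₁ l t = 0)
    (hsupp₁' : ∀ l t, t ∉ tok₁' l → M₁' l t = 0)
    (α : ℝ) (l₁ l₂ : List A) :
    ∀ (z g : List A) (T T' : Finset (List A)) (d : List A → ℝ)
      (T₂ : Finset (List A)) (d₂ : List A → ℝ),
      (∀ t ∉ T, d t = 0) → (∀ t ∉ T', d t = 0) →
      ced M₁ M₂ tok₁ tok₂ α l₁ l₂ g T d T₂ d₂ z =
        ced M₁' M₂ tok₁' tok₂ α l₁ l₂ g T' d T₂ d₂ z := by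
  intro z
  induction z with
  | nil => intros; rfl
  | cons c z ih =>
    intro g T T' d T₂ d₂ hT hT'
    have hmarg : margP T' d c = margP T d c := margP_congr T' T d hT' hT c
    have hstep : stepD T' d c = stepD T d c := by
      rw [stepD_eq T' d hT', stepD_eq T d hT, hmarg]
    set L := l₁ ++ (g ++ [c]) with hL
    have hsupp'' : ∀ t ∉ tok₁' L, M₁ L t = 0 := by
      intro t htn; rw [hM L]; exact hsupp₁' L t htn
    have hsuppC : ∀ s ∉ stepT T c, eotStrip (stepD T d c) s = 0 :=
      eotStrip_stepD_support T d hT c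
    have hsuppC' : ∀ s ∉ stepT T' c, eotStrip (stepD T d c) s = 0 := by
      intro s hs; rw [← hstep]; exact eotStrip_stepD_support T' d hT' c s hs
    have e₁ := ih (g ++ [c]) (tok₁ L) (tok₁' L) (M₁ L)
      (tok₂ (l₂ ++ (g ++ [c]))) (M₂ (l₂ ++ (g ++ [c]))) (hsupp₁ L) hsupp''
    have e₂ := ih (g ++ [c]) (tok₁ L) (tok₁' L) (M₁ L)
      (stepT T₂ c) (eotStrip (stepD T₂ d₂ c)) (hsupp₁ L) hsupp''
    have e₃ := ih (g ++ [c]) (stepT T c) (stepT T' c) (eotStrip (stepD T d c))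
      (tok₂ (l₂ ++ (g ++ [c]))) (M₂ (l₂ ++ (g ++ [c]))) hsuppC hsuppC'
    have e₄ := ih (g ++ [c]) (stepT T c) (stepT T' c) (eotStrip (stepD T d c))
      (stepT T₂ c) (eotStrip (stepD T₂ d₂ c)) hsuppC hsuppC'
    simp only [ced]
    rw [hmarg, hstep, ← hM L, e₁, e₂, e₃, e₄]

/-- Tokenization Invariance: if `M₁` and `M₁'` (with possibly different
token vocabularies `tok₁`, `tok₁'`) induce the same distribution over character strings,
i.e. `P_{M₁}(z|l) = P_{M₁'}(z|l)` for all prompts `l` and strings `z`, then for any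
second model `M₂` and weight `α ∈ [0,1]`, the CharED ensembles of `(M₁, M₂)` and of
`(M₁', M₂)` induce the same distribution over output strings. -/
theorem tokenization_invariance {A : Type*} [DecidableEq A]
    (M₁ M₁' M₂ : List A → List A → ℝ)
    (tok₁ tok₁' tok₂ : List A → Finset (List A))
    (hne₁ : ∀ l, ∀ t ∈ tok₁ l, t ≠ []) (h0₁ : ∀ l t, 0 ≤ M₁ l t)
    (hsupp₁ : ∀ l t, t ∉ tok₁ l → M₁ l t = 0) (hsum₁ : ∀ l, ∑ t ∈ tok₁ l, M₁ l t = 1)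
    (hne₁' : ∀ l, ∀ t ∈ tok₁' l, t ≠ []) (h0₁' : ∀ l t, 0 ≤ M₁' l t)
    (hsupp₁' : ∀ l t, t ∉ tok₁' l → M₁' l t = 0)
    (hsum₁' : ∀ l, ∑ t ∈ tok₁' l, M₁' l t = 1)
    (hne₂ : ∀ l, ∀ t ∈ tok₂ l, t ≠ []) (h0₂ : ∀ l t, 0 ≤ M₂ l t)
    (hsupp₂ : ∀ l t, t ∉ tok₂ l → M₂ l t = 0) (hsum₂ : ∀ l, ∑ t ∈ tok₂ l, M₂ l t = 1)
    (α : ℝ) (hα : α ∈ Set.Icc (0 : ℝ) 1)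
    (heq : ∀ l z : List A, strProb M₁ l z = strProb M₁' l z) :
    ∀ l₁ l₂ z : List A,
      cedProb M₁ M₂ tok₁ tok₂ α l₁ l₂ z = cedProb M₁' M₂ tok₁' tok₂ α l₁ l₂ z := by
  intro l₁ l₂ z
  have hM := M_eq M₁ M₁' tok₁ tok₁' hne₁ hsupp₁ hne₁' hsupp₁' heq
  unfold cedProb
  rw [← hM l₁]
  exact ced_congr M₁ M₁' M₂ tok₁ tok₁' tok₂ hM hsupp₁ hsupp₁' α l₁ l₂ z []
    (tok₁ l₁) (tok₁' l₁) (M₁ l₁) (tok₂ l₂) (M₂ l₂) (hsupp₁ l₁)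
    (fun t ht => by rw [hM l₁]; exact hsupp₁' l₁ t ht)
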